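/- Let 1 ≤ Z₁ < Z₂ with β·Z₁ ≤ 1 ≤ β·Z₂ and β·Z₂ ≥ Z₁. Then sup_{z ∈ [Z₁, Z₂/β]} (μ_{[Z₁,Z₂]}(z) − z^{−α}) < sup_{z ∈ [Z₁, Z₂/β]} (μ̂₂(z) − z^{−α}) if and only if p < 1 − (β·Z₂)^{−α}. -/

import Mathlib

open Set

/-- Tail function `F̄(t) = min(1, t^{-α})`. -/
noncomputable def Fbar (α t : ℝ) : ℝ := min 1 (t ^ (-α))

/-- Biased school assignment of a G₂ student of true potential `z`. -/
noncomputable def muHat2 (α β p z : ℝ) : ℝ :=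
  (1 - p) * Fbar α (β * z) + p * z ^ (-α)

/-- School attended by a G₂ student of true potential `z` after the G₂ students
with true potentials in `[Z₁, Z₂]` have been debiased. -/
noncomputable def muT (α β p Z₁ Z₂ z : ℝ) : ℝ :=
  if z < Z₁ then (1 - p) * Fbar α (β * z) + p * z ^ (-α)
  else if z ≤ Z₂ then
    (1 - p) * z ^ (-α) + p * (z ^ (-α) - Z₂ ^ (-α)) + p * (max (z / β) Z₂) ^ (-α)
  else
    (1 - p) * Fbar α (β * z) + p * z ^ (-α)
      + p * max 0 ((max (β * z) Z₁) ^ (-α) - Z₂ ^ (-α))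

/-- Antitonicity of `x ↦ x^{-α}` on positives. -/
lemma rpow_neg_anti {α x y : ℝ} (hα : 0 ≤ α) (hx : 0 < x) (hxy : x ≤ y) :
    y ^ (-α) ≤ x ^ (-α) := by
  rw [Real.rpow_neg hx.le, Real.rpow_neg (hx.le.trans hxy)]
  exact inv_anti₀ (Real.rpow_pos_of_pos hx α) (Real.rpow_le_rpow hx.le hxy hα)

/-- Case I.2: the intervention reduces the maximum mistreatment over the
affected region if and only if `p < 1 - (βZ₂)^{-α}`. -/
theorem intervention_improves_iff_caseI2 (α β p Z₁ Z₂ : ℝ) (hα : 0 < α)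
    (hβ : β ∈ Ioo (0:ℝ) 1) (hp : p ∈ Ioo (0:ℝ) 1)
    (hZ₁ : 1 ≤ Z₁) (hZ : Z₁ < Z₂) (hlo : β * Z₁ ≤ 1) (hhi : 1 ≤ β * Z₂)
    (hover : Z₁ ≤ β * Z₂) :
    sSup ((fun z => muT α β p Z₁ Z₂ z - z ^ (-α)) '' Icc Z₁ (Z₂ / β))
      < sSup ((fun z => muHat2 α β p z - z ^ (-α)) '' Icc Z₁ (Z₂ / β))
      ↔ p < 1 - (β * Z₂) ^ (-α) := by
  obtain ⟨hβ0, hβ1⟩ := hβ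
  obtain ⟨hp0, hp1⟩ := hp
  have hZ₁0 : (0:ℝ) < Z₁ := lt_of_lt_of_le one_pos hZ₁
  have hZ₂0 : (0:ℝ) < Z₂ := hZ₁0.trans hZ
  have hZ₂1 : (1:ℝ) < Z₂ := by nlinarith
  have hRpos : 0 < Z₂ / β := div_pos hZ₂0 hβ0
  have hZ₂R : Z₂ < Z₂ / β := by
    rw [lt_div_iff₀ hβ0]; nlinarith
  have hZ₁R : Z₁ ≤ Z₂ / β := le_of_lt (hZ.trans hZ₂R)
  -- key constants
  set B : ℝ := (β * Z₂) ^ (-α) with hB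
  set L : ℝ := B - Z₂ ^ (-α) with hL
  set Rv : ℝ := (1 - p) * (1 - β ^ α) with hRv
  have hβα1 : β ^ α < 1 := Real.rpow_lt_one hβ0.le hβ1 hα
  have hβα0 : 0 < β ^ α := Real.rpow_pos_of_pos hβ0 α
  have hBeq : B = β ^ (-α) * Z₂ ^ (-α) := Real.mul_rpow hβ0.le hZ₂0.le
  have hZ₂B : Z₂ ^ (-α) = B * β ^ α := by
    rw [hBeq, Real.rpow_neg hβ0.le]
    field_simp
  have hLnn : 0 ≤ L := by
    have : Z₂ ^ (-α) ≤ B := rpow_neg_anti hα.le (by positivity) (by nlinarith)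
    simpa [hL] using this
  have hB0 : 0 < B := Real.rpow_pos_of_pos (by positivity) _
  -- the sets
  set S₁ : Set ℝ := (fun z => muT α β p Z₁ Z₂ z - z ^ (-α)) '' Icc Z₁ (Z₂ / β) with hS₁
  set S₂ : Set ℝ := (fun z => muHat2 α β p z - z ^ (-α)) '' Icc Z₁ (Z₂ / β) with hS₂
  have hne₁ : S₁.Nonempty := ⟨_, ⟨Z₁, ⟨le_refl _, hZ₁R⟩, rfl⟩⟩
  have hne₂ : S₂.Nonempty := ⟨_, ⟨Z₁, ⟨le_refl _, hZ₁R⟩, rfl⟩⟩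
  -- RHS: upper bound Rv
  have hub₂ : ∀ x ∈ S₂, x ≤ Rv := by
    rintro x ⟨z, ⟨hz1, hz2⟩, rfl⟩
    have hz0 : 0 < z := lt_of_lt_of_le hZ₁0 hz1
    simp only [muHat2, Fbar]
    rcases le_or_gt z (1 / β) with hc | hc
    · -- z ≤ 1/β : use min ≤ 1 and z^{-α} ≥ β^α
      have h1 : min 1 ((β*z) ^ (-α)) ≤ 1 := min_le_left _ _
      have h2 : β ^ α ≤ z ^ (-α) := by
        have := rpow_neg_anti hα.le hz0 hc
        rwa [one_div, Real.inv_rpow hβ0.le, Real.rpow_neg hβ0.le, inv_inv] at this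
      nlinarith [min_le_left 1 ((β*z) ^ (-α))]
    · -- z > 1/β : min ≤ (βz)^{-α} = β^{-α} z^{-α}, and z^{-α} ≤ β^α
      have hβz1 : 1 ≤ β * z := by
        rw [div_lt_iff₀ hβ0] at hc; nlinarith
      have h1 : min 1 ((β*z) ^ (-α)) ≤ (β*z) ^ (-α) := min_le_right _ _
      have h2 : z ^ (-α) ≤ β ^ α := by
        have := rpow_neg_anti hα.le (by positivity : (0:ℝ) < 1/β) hc.le
        rwa [one_div, Real.inv_rpow hβ0.le, Real.rpow_neg hβ0.le, inv_inv] at this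
      have h3 : (β*z) ^ (-α) = β ^ (-α) * z ^ (-α) := Real.mul_rpow hβ0.le hz0.le
      have h4 : β ^ (-α) = (β ^ α)⁻¹ := Real.rpow_neg hβ0.le α
      have h5 : β ^ (-α) * z ^ (-α) - z ^ (-α) ≤ 1 - β ^ α := by
        have hz' : 0 < z ^ (-α) := Real.rpow_pos_of_pos hz0 _
        have : β ^ (-α) * z ^ (-α) - z ^ (-α) = z ^ (-α) * (β ^ (-α) - 1) := by ring
        rw [this]
        have hβinv : (1:ℝ) ≤ β ^ (-α) :=
          Real.one_le_rpow_of_pos_of_le_one_of_nonpos hβ0 hβ1.le (by linarith)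
        calc z ^ (-α) * (β ^ (-α) - 1) ≤ β ^ α * (β ^ (-α) - 1) := by
              apply mul_le_mul_of_nonneg_right h2; linarith
          _ = 1 - β ^ α := by rw [h4]; field_simp
      nlinarith [min_le_right 1 ((β*z) ^ (-α))]
  have hbdd₂ : BddAbove S₂ := ⟨Rv, hub₂⟩
  -- RHS: value attained at z = 1/β
  have hmem₂ : Rv ∈ S₂ := by
    refine ⟨1/β, ⟨?_, ?_⟩, ?_⟩
    · rw [le_div_iff₀ hβ0]; linarith [mul_comm Z₁ β]
    · rw [div_le_div_iff₀ hβ0 hβ0]; nlinarith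
    · have h1 : β * (1/β) = 1 := by field_simp
      have h2 : (1/β : ℝ) ^ (-α) = β ^ α := by
        rw [one_div, Real.inv_rpow hβ0.le, Real.rpow_neg hβ0.le, inv_inv]
      simp only [muHat2, Fbar, h1, h2, Real.one_rpow]
      rw [min_self]
      ring
  have hsup₂ : sSup S₂ = Rv :=
    le_antisymm (csSup_le hne₂ hub₂) (le_csSup hbdd₂ hmem₂)
  -- muT formula on (Z₂, Z₂/β]
  have hformC : ∀ z ∈ Ioc Z₂ (Z₂ / β),
      muT α β p Z₁ Z₂ z - z ^ (-α)
        = z ^ (-α) * (β ^ (-α) - (1 - p)) - p * Z₂ ^ (-α) := by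
    rintro z ⟨hz1, hz2⟩
    have hz0 : 0 < z := hZ₂0.trans hz1
    have hβz1 : 1 ≤ β * z :=
      le_trans hhi (le_of_lt (mul_lt_mul_of_pos_left hz1 hβ0))
    have hβzZ₂ : β * z ≤ Z₂ := by
      have h := (le_div_iff₀ hβ0).mp hz2
      linarith [mul_comm z β]
    have hnot1 : ¬ z < Z₁ := by push_neg; linarith
    have hnot2 : ¬ z ≤ Z₂ := not_le.mpr hz1
    have hFbar : Fbar α (β * z) = (β * z) ^ (-α) := by
      simp only [Fbar]
      exact min_eq_right (Real.rpow_le_one_of_one_le_of_nonpos hβz1 (by linarith))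
    have hmax1 : max (β * z) Z₁ = β * z :=
      max_eq_left (le_trans hover (le_of_lt (mul_lt_mul_of_pos_left hz1 hβ0)))
    have hmax2 : max 0 ((β * z) ^ (-α) - Z₂ ^ (-α)) = (β * z) ^ (-α) - Z₂ ^ (-α) := by
      apply max_eq_right
      have := rpow_neg_anti hα.le (by positivity : (0:ℝ) < β * z) hβzZ₂
      linarith
    rw [muT, if_neg hnot1, if_neg hnot2, hFbar, hmax1, hmax2,
      Real.mul_rpow hβ0.le hz0.le]
    ring
  -- LHS: upper bound L
  have hub₁ : ∀ x ∈ S₁, x ≤ L := by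
    rintro x ⟨z, ⟨hz1, hz2⟩, rfl⟩
    have hz0 : 0 < z := lt_of_lt_of_le hZ₁0 hz1
    rcases le_or_gt z Z₂ with hc | hc
    · -- middle branch: value ≤ 0 ≤ L
      have hnot1 : ¬ z < Z₁ := not_lt.mpr hz1
      simp only [muT, if_neg hnot1, if_pos hc]
      have hmx : Z₂ ≤ max (z / β) Z₂ := le_max_right _ _
      have h1 : (max (z / β) Z₂) ^ (-α) ≤ Z₂ ^ (-α) := rpow_neg_anti hα.le hZ₂0 hmx
      have h2 : p * (max (z / β) Z₂) ^ (-α) ≤ p * Z₂ ^ (-α) :=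
        mul_le_mul_of_nonneg_left h1 hp0.le
      linarith
    · show muT α β p Z₁ Z₂ z - z ^ (-α) ≤ L
      rw [hformC z ⟨hc, hz2⟩]
      have h1 : z ^ (-α) ≤ Z₂ ^ (-α) := rpow_neg_anti hα.le hZ₂0 hc.le
      have h2 : (0:ℝ) < β ^ (-α) - (1 - p) := by
        have : (1:ℝ) ≤ β ^ (-α) :=
          Real.one_le_rpow_of_pos_of_le_one_of_nonpos hβ0 hβ1.le (by linarith)
        linarith
      have h3 : z ^ (-α) * (β ^ (-α) - (1 - p)) ≤ Z₂ ^ (-α) * (β ^ (-α) - (1 - p)) :=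
        mul_le_mul_of_nonneg_right h1 h2.le
      have h4 : Z₂ ^ (-α) * (β ^ (-α) - (1 - p)) - p * Z₂ ^ (-α) = L := by
        rw [hL, hBeq]; ring
      linarith
  have hbdd₁ : BddAbove S₁ := ⟨L, hub₁⟩
  -- LHS: sSup S₁ = L via the limit z → Z₂⁺
  have hsup₁ : sSup S₁ = L := by
    refine le_antisymm (csSup_le hne₁ hub₁) ?_
    rw [le_csSup_iff hbdd₁ hne₁]
    intro b hb
    have hcont : ContinuousAt (fun z : ℝ => z ^ (-α)) Z₂ :=
      Real.continuousAt_rpow_const Z₂ (-α) (Or.inl hZ₂0.ne')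
    have htend : Filter.Tendsto
        (fun z : ℝ => z ^ (-α) * (β ^ (-α) - (1 - p)) - p * Z₂ ^ (-α))
        (nhdsWithin Z₂ (Ioi Z₂)) (nhds L) := by
      have hL' : L = Z₂ ^ (-α) * (β ^ (-α) - (1 - p)) - p * Z₂ ^ (-α) := by
        rw [hL, hBeq]; ring
      rw [hL']
      exact ((hcont.tendsto.mul_const _).sub_const _).mono_left nhdsWithin_le_nhds
    refine le_of_tendsto htend ?_
    have hmem : Ioc Z₂ (Z₂ / β) ∈ nhdsWithin Z₂ (Ioi Z₂) :=
      Ioc_mem_nhdsGT_of_mem ⟨le_refl _, hZ₂R⟩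
    filter_upwards [hmem] with z hz
    rw [← hformC z hz]
    exact hb ⟨z, ⟨le_of_lt (hZ.trans hz.1), hz.2⟩, rfl⟩
  -- conclusion
  rw [hsup₁, hsup₂]
  have hLeq : L = B * (1 - β ^ α) := by rw [hL, hZ₂B]; ring
  constructor
  · intro h
    rw [hLeq, hRv] at h
    have := (mul_lt_mul_iff_left₀ (by linarith : (0:ℝ) < 1 - β ^ α)).mp h
    linarith
  · intro h
    rw [hLeq, hRv]
    exact (mul_lt_mul_iff_left₀ (by linarith : (0:ℝ) < 1 - β ^ α)).mpr (by linarith)
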